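/- Let (i_1,…,i_N) be any reduced expression for w_0, let z_1,…,z_N ∈ K^×, and set A := x_{−i_1}(z_1)·x_{−i_2}(z_2)⋯x_{−i_N}(z_N). Then there exist a lower unitriangular matrix L and an upper unitriangular matrix U with (w̄_0·A^T)^{−1} = L·U; equivalently, every leading principal minor of (w̄_0·A^T)^{−1} equals 1. -/

import Mathlib

open Matrix

noncomputable section

variable {K : Type*} [Field K]

/-- `x_i(z)`: identity except entry `z` in (1-based) position `(i, i+1)`. -/
def xMat (n i : ℕ) (z : K) : Matrix (Fin n) (Fin n) K :=
  Matrix.of fun a b => if (a : ℕ) = (b : ℕ) then 1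
    else if (a : ℕ) + 1 = i ∧ (b : ℕ) = i then z else 0

/-- `y_i(z)`: identity except entry `z` in (1-based) position `(i+1, i)`. -/
def yMat (n i : ℕ) (z : K) : Matrix (Fin n) (Fin n) K :=
  Matrix.of fun a b => if (a : ℕ) = (b : ℕ) then 1
    else if (a : ℕ) = i ∧ (b : ℕ) + 1 = i then z else 0

/-- `x_{-i}(z)`: identity except the 2×2 submatrix in (1-based) rows/columns `i, i+1`
is `((z⁻¹, 0), (1, z))`. -/
def xnegMat (n i : ℕ) (z : K) : Matrix (Fin n) (Fin n) K :=
  Matrix.of fun a b =>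
    if (a : ℕ) + 1 = i ∧ (b : ℕ) + 1 = i then z⁻¹
    else if (a : ℕ) = i ∧ (b : ℕ) = i then z
    else if (a : ℕ) = i ∧ (b : ℕ) + 1 = i then 1
    else if (a : ℕ) = (b : ℕ) then 1
    else 0

/-- `s̄_i := x_i(-1) · y_i(1) · x_i(-1)`. -/
def sbar (n i : ℕ) : Matrix (Fin n) (Fin n) K :=
  xMat n i (-1) * yMat n i 1 * xMat n i (-1)

/-- The reduced expression `i₀ = (1,2,…,n-1, 1,2,…,n-2, …, 1,2, 1)` for `w₀`. -/
def i0List (n : ℕ) : List ℕ :=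
  ((List.range (n - 1)).map fun j => List.range' 1 (n - 1 - j)).foldr (· ++ ·) []

/-- The reduced expression `i₀' = (n-1,…,1, n-1,…,2, …, n-1,n-2, n-1)` for `w₀`. -/
def i0'List (n : ℕ) : List ℕ :=
  ((List.range (n - 1)).map fun j => (List.range' (1 + j) (n - 1 - j)).reverse).foldr (· ++ ·) []

/-- The matrix `w̄₀ = s̄_{i_1} ⋯ s̄_{i_N}` (computed along `i₀`; it is independent of the
choice of reduced expression). -/
def w0Mat (n : ℕ) : Matrix (Fin n) (Fin n) K :=
  ((i0List n).map fun i => sbar n i).prod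

/-- `x_{-i_1}(z_1) ⋯ x_{-i_N}(z_N)` along the word `l` (with 1-based coordinates `z`). -/
def xnegProd (n : ℕ) (l : List ℕ) (z : ℕ → K) : Matrix (Fin n) (Fin n) K :=
  ((List.range l.length).map fun r => xnegMat n (l.getD r 0) (z (r + 1))).prod

/-- `x_{i_1}(p_1) ⋯ x_{i_N}(p_N)` along the word `l`. -/
def xProd (n : ℕ) (l : List ℕ) (p : ℕ → K) : Matrix (Fin n) (Fin n) K :=
  ((List.range l.length).map fun r => xMat n (l.getD r 0) (p (r + 1))).prod

/-- `y_{i_1}(q_1) ⋯ y_{i_N}(q_N)` along the word `l`. -/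
def yProd (n : ℕ) (l : List ℕ) (q : ℕ → K) : Matrix (Fin n) (Fin n) K :=
  ((List.range l.length).map fun r => yMat n (l.getD r 0) (q (r + 1))).prod

/-- The adjacent transposition `σ_i` (swapping `i` and `i+1`), as a function on `ℕ`. -/
def sigmaFun (i : ℕ) : ℕ → ℕ := fun k => if k = i then i + 1 else if k = i + 1 then i else k

/-- `σ_{i_1} ∘ σ_{i_2} ∘ ⋯ ∘ σ_{i_N}` (rightmost factor applied first). -/
def wordPerm (l : List ℕ) : ℕ → ℕ := l.foldr (fun i f => sigmaFun i ∘ f) id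

/-- A reduced expression for the longest element `w₀` of `Sₙ`. -/
def IsReducedWord (n : ℕ) (l : List ℕ) : Prop :=
  l.length = n * (n - 1) / 2 ∧ (∀ i ∈ l, 1 ≤ i ∧ i ≤ n - 1) ∧
    ∀ k, 1 ≤ k → k ≤ n → wordPerm l k = n + 1 - k

/-- Lower unitriangular. -/
def IsLowerUni {n : ℕ} (M : Matrix (Fin n) (Fin n) K) : Prop :=
  (∀ i, M i i = 1) ∧ ∀ i j : Fin n, i < j → M i j = 0

/-- Upper unitriangular. -/
def IsUpperUni {n : ℕ} (M : Matrix (Fin n) (Fin n) K) : Prop :=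
  (∀ i, M i i = 1) ∧ ∀ i j : Fin n, j < i → M i j = 0

/-- `s_k := Σ_{j=1}^{k-1} (n - j)`. -/
def sIdx (n k : ℕ) : ℕ := ∑ j ∈ Finset.range (k - 1), (n - (j + 1))

set_option maxRecDepth 10000

namespace Aux

variable {n : ℕ}

def Em (n : ℕ) (p q : Fin n) : Matrix (Fin n) (Fin n) K :=
  Matrix.of fun a b => if a = p ∧ b = q then 1 else 0

lemma Em_apply (p q a b : Fin n) :
    (Em n p q : Matrix (Fin n) (Fin n) K) a b = if a = p ∧ b = q then 1 else 0 := rfl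

lemma Em_mul_apply (p q : Fin n) (M : Matrix (Fin n) (Fin n) K) (a b : Fin n) :
    ((Em n p q : Matrix (Fin n) (Fin n) K) * M) a b = if a = p then M q b else 0 := by
  rw [Matrix.mul_apply]
  by_cases h : a = p
  · subst h
    rw [Finset.sum_eq_single q] <;> simp +contextual [Em_apply]
  · simp [Em_apply, h]

lemma mul_Em_apply (p q : Fin n) (M : Matrix (Fin n) (Fin n) K) (a b : Fin n) :
    (M * (Em n p q : Matrix (Fin n) (Fin n) K)) a b = if b = q then M a p else 0 := by
  rw [Matrix.mul_apply]
  by_cases h : b = q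
  · subst h
    rw [Finset.sum_eq_single p] <;> simp +contextual [Em_apply]
  · simp [Em_apply, h]

lemma Em_mul_Em (p q r s : Fin n) :
    (Em n p q * Em n r s : Matrix (Fin n) (Fin n) K) = if q = r then Em n p s else 0 := by
  ext a b
  rw [Em_mul_apply]
  by_cases h : q = r <;> by_cases ha : a = p <;>
    simp [Em_apply, h, ha, Matrix.zero_apply]

lemma xMat_eq (i : ℕ) (h1 : 1 ≤ i) (h2 : i + 1 ≤ n) (c : K) :
    xMat n i c = 1 + c • Em n ⟨i-1, by omega⟩ ⟨i, by omega⟩ := by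
  ext a b
  simp only [xMat, Matrix.of_apply, Matrix.add_apply, Matrix.smul_apply, Em_apply,
    Matrix.one_apply, Fin.ext_iff, Fin.mk.injEq, smul_eq_mul]
  split_ifs <;> first | rfl | (exfalso; omega) | ring

lemma yMat_eq (i : ℕ) (h1 : 1 ≤ i) (h2 : i + 1 ≤ n) (c : K) :
    yMat n i c = 1 + c • Em n ⟨i, by omega⟩ ⟨i-1, by omega⟩ := by
  ext a b
  simp only [yMat, Matrix.of_apply, Matrix.add_apply, Matrix.smul_apply, Em_apply,
    Matrix.one_apply, Fin.ext_iff, Fin.mk.injEq, smul_eq_mul]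
  split_ifs <;> first | rfl | (exfalso; omega) | ring

lemma xnegMat_eq (i : ℕ) (h1 : 1 ≤ i) (h2 : i + 1 ≤ n) (z : K) :
    xnegMat n i z = 1 + (z⁻¹-1) • Em n ⟨i-1, by omega⟩ ⟨i-1, by omega⟩
      + (z-1) • Em n ⟨i, by omega⟩ ⟨i, by omega⟩ + Em n ⟨i, by omega⟩ ⟨i-1, by omega⟩ := by
  ext a b
  simp only [xnegMat, Matrix.of_apply, Matrix.add_apply, Matrix.smul_apply, Em_apply,
    Matrix.one_apply, Fin.ext_iff, Fin.mk.injEq, smul_eq_mul]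
  split_ifs <;> first | rfl | (exfalso; omega) | ring

lemma sbar_eq (i : ℕ) (h1 : 1 ≤ i) (h2 : i + 1 ≤ n) :
    (sbar n i : Matrix (Fin n) (Fin n) K)
      = 1 + Em n ⟨i, by omega⟩ ⟨i-1, by omega⟩ - Em n ⟨i-1, by omega⟩ ⟨i, by omega⟩
        - Em n ⟨i-1, by omega⟩ ⟨i-1, by omega⟩ - Em n ⟨i, by omega⟩ ⟨i, by omega⟩ := by
  have e1 : ¬((⟨i, by omega⟩ : Fin n) = ⟨i-1, by omega⟩) := by simp [Fin.ext_iff]; omega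
  have e2 : ¬((⟨i-1, by omega⟩ : Fin n) = ⟨i, by omega⟩) := by simp [Fin.ext_iff]; omega
  rw [sbar, xMat_eq i h1 h2, yMat_eq i h1 h2]
  simp only [mul_add, add_mul, mul_one, one_mul, mul_smul_comm, smul_mul_assoc,
    Em_mul_Em, smul_smul, if_neg e1, if_neg e2, eq_self_iff_true, if_true, smul_zero,
    mul_zero, zero_mul, add_zero]
  module

def sbarInv (n i : ℕ) (h1 : 1 ≤ i) (h2 : i + 1 ≤ n) : Matrix (Fin n) (Fin n) K :=
  1 + Em n ⟨i-1, by omega⟩ ⟨i, by omega⟩ - Em n ⟨i, by omega⟩ ⟨i-1, by omega⟩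
    - Em n ⟨i-1, by omega⟩ ⟨i-1, by omega⟩ - Em n ⟨i, by omega⟩ ⟨i, by omega⟩

lemma sbar_mul_sbarInv (i : ℕ) (h1 : 1 ≤ i) (h2 : i + 1 ≤ n) :
    (sbar n i : Matrix (Fin n) (Fin n) K) * sbarInv n i h1 h2 = 1 := by
  have e1 : ¬((⟨i, by omega⟩ : Fin n) = ⟨i-1, by omega⟩) := by simp [Fin.ext_iff]; omega
  have e2 : ¬((⟨i-1, by omega⟩ : Fin n) = ⟨i, by omega⟩) := by simp [Fin.ext_iff]; omega
  rw [sbar_eq i h1 h2, sbarInv]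
  simp only [mul_add, add_mul, mul_one, one_mul, mul_sub, sub_mul,
    Em_mul_Em, if_neg e1, if_neg e2, eq_self_iff_true, if_true]
  module

lemma sbarInv_mul_sbar (i : ℕ) (h1 : 1 ≤ i) (h2 : i + 1 ≤ n) :
    (sbarInv n i h1 h2 : Matrix (Fin n) (Fin n) K) * sbar n i = 1 := by
  have e1 : ¬((⟨i, by omega⟩ : Fin n) = ⟨i-1, by omega⟩) := by simp [Fin.ext_iff]; omega
  have e2 : ¬((⟨i-1, by omega⟩ : Fin n) = ⟨i, by omega⟩) := by simp [Fin.ext_iff]; omega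
  rw [sbar_eq i h1 h2, sbarInv]
  simp only [mul_add, add_mul, mul_one, one_mul, mul_sub, sub_mul,
    Em_mul_Em, if_neg e1, if_neg e2, eq_self_iff_true, if_true]
  module

lemma xneg_fact (i : ℕ) (h1 : 1 ≤ i) (h2 : i + 1 ≤ n) (z : K) (hz : z ≠ 0) :
    xnegMat n i z = xMat n i z⁻¹ * sbar n i * xMat n i z := by
  have e1 : ¬((⟨i, by omega⟩ : Fin n) = ⟨i-1, by omega⟩) := by simp [Fin.ext_iff]; omega
  have e2 : ¬((⟨i-1, by omega⟩ : Fin n) = ⟨i, by omega⟩) := by simp [Fin.ext_iff]; omega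
  rw [sbar_eq i h1 h2, xMat_eq i h1 h2, xMat_eq i h1 h2, xnegMat_eq i h1 h2]
  simp only [mul_add, add_mul, mul_one, one_mul, mul_sub, sub_mul, mul_smul_comm,
    smul_mul_assoc, Em_mul_Em, smul_smul, if_neg e1, if_neg e2, eq_self_iff_true, if_true,
    smul_zero, mul_zero, zero_mul, sub_zero, add_zero, inv_mul_cancel₀ hz,
    mul_inv_cancel₀ hz]
  match_scalars <;> (field_simp; try ring)

lemma xMat_mul_xMat (i : ℕ) (h1 : 1 ≤ i) (h2 : i + 1 ≤ n) (c d : K) :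
    (xMat n i c : Matrix (Fin n) (Fin n) K) * xMat n i d = xMat n i (c + d) := by
  have e1 : ¬((⟨i, by omega⟩ : Fin n) = ⟨i-1, by omega⟩) := by simp [Fin.ext_iff]; omega
  rw [xMat_eq i h1 h2, xMat_eq i h1 h2, xMat_eq i h1 h2]
  simp only [mul_add, add_mul, mul_one, one_mul, mul_smul_comm, smul_mul_assoc,
    Em_mul_Em, smul_smul, if_neg e1, smul_zero]
  module


def etaK (K : Type*) [Field K] (f : ℕ → ℕ) (j : ℕ) : K :=
  (-1) ^ ((Finset.Icc 1 (j-1)).filter (fun m => f j < f m)).card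

lemma etaK_sq (f : ℕ → ℕ) (j : ℕ) : etaK K f j * etaK K f j = 1 := by
  rw [etaK, ← mul_pow]; norm_num

def SPM (K : Type*) [Field K] (n : ℕ) (f : ℕ → ℕ) : Matrix (Fin n) (Fin n) K :=
  Matrix.of fun a b => if (a : ℕ) + 1 = f ((b : ℕ) + 1) then etaK K f ((b : ℕ) + 1) else 0

lemma SPM_apply {n} (f : ℕ → ℕ) (a b : Fin n) :
    SPM K n f a b = if (a : ℕ) + 1 = f ((b : ℕ) + 1) then etaK K f ((b : ℕ) + 1) else 0 := rfl

lemma etaK_congr (f g : ℕ → ℕ) (j : ℕ) (h : ∀ m, 1 ≤ m → m ≤ j → f m = g m) :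
    etaK K f j = etaK K g j := by
  unfold etaK
  congr 1
  apply congr_arg Finset.card
  apply Finset.filter_congr
  intro m hm
  simp only [Finset.mem_Icc] at hm
  rw [h m hm.1 (by omega), h j (by omega) le_rfl]

lemma SPM_congr {n} (f g : ℕ → ℕ) (h : ∀ m, 1 ≤ m → m ≤ n → f m = g m) :
    SPM K n f = SPM K n g := by
  ext a b
  rw [SPM_apply, SPM_apply, h ((b:ℕ)+1) (by omega) (by omega),
    etaK_congr f g ((b:ℕ)+1) (fun m h1 h2 => h m h1 (by omega))]

lemma SPM_id {n} : SPM K n id = 1 := by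
  ext a b
  rw [SPM_apply]
  have h0 : ((Finset.Icc 1 ((b:ℕ)+1-1)).filter (fun m => id ((b:ℕ)+1) < id m)).card = 0 := by
    rw [Finset.card_eq_zero, Finset.filter_eq_empty_iff]
    intro m hm
    simp only [Finset.mem_Icc] at hm
    simp only [id_eq]; omega
  rw [etaK, h0, pow_zero, Matrix.one_apply]
  by_cases h : a = b
  · subst h; simp
  · rw [if_neg (by simp [Fin.ext_iff] at h ⊢; omega), if_neg h]
lemma sig_self (i x : ℕ) (hx1 : x ≠ i) (hx2 : x ≠ i + 1) : sigmaFun i x = x := by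
  unfold sigmaFun; split_ifs <;> omega

lemma sig_apply_i (i : ℕ) : sigmaFun i i = i + 1 := by unfold sigmaFun; simp

lemma sig_apply_i1 (i : ℕ) : sigmaFun i (i+1) = i := by
  unfold sigmaFun; split_ifs <;> omega

lemma sig_lt_sig (i x y : ℕ) (hx1 : x ≠ i) (hx2 : x ≠ i + 1) :
    x < sigmaFun i y ↔ x < y := by
  unfold sigmaFun; split_ifs <;> omega

section Sig
variable {v : ℕ → ℕ} {i : ℕ}

lemma etaE1 (j : ℕ) (hji : v j ≠ i) (hji' : v j ≠ i + 1) :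
    etaK K (sigmaFun i ∘ v) j = etaK K v j := by
  unfold etaK
  congr 1
  apply congr_arg Finset.card
  apply Finset.filter_congr
  intro m _
  simp only [Function.comp_apply, sig_self i (v j) hji hji', eq_iff_iff]
  exact sig_lt_sig i (v j) (v m) hji hji'

lemma etaE2 (hinj : ∀ x y, v x = v y → x = y) (a₀ b₀ : ℕ)
    (hva : v a₀ = i) (hvb : v b₀ = i + 1) (hab : a₀ < b₀) :
    etaK K (sigmaFun i ∘ v) a₀ = etaK K v a₀ := by
  unfold etaK
  congr 1
  apply congr_arg Finset.card
  apply Finset.filter_congr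
  intro m hm
  simp only [Finset.mem_Icc] at hm
  have hmi : v m ≠ i := fun h => by have := hinj m a₀ (h.trans hva.symm); omega
  have hmi' : v m ≠ i + 1 := fun h => by have := hinj m b₀ (h.trans hvb.symm); omega
  simp only [Function.comp_apply, hva, sig_apply_i, eq_iff_iff,
    sig_self i (v m) hmi hmi']
  omega

lemma etaE3 (hinj : ∀ x y, v x = v y → x = y) (a₀ b₀ : ℕ) (ha1 : 1 ≤ a₀)
    (hva : v a₀ = i) (hvb : v b₀ = i + 1) (hab : a₀ < b₀) :
    etaK K (sigmaFun i ∘ v) b₀ = - etaK K v b₀ := by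
  unfold etaK
  have hset : (Finset.Icc 1 (b₀-1)).filter (fun m => (sigmaFun i ∘ v) b₀ < (sigmaFun i ∘ v) m)
      = insert a₀ ((Finset.Icc 1 (b₀-1)).filter (fun m => v b₀ < v m)) := by
    ext m
    simp only [Finset.mem_insert, Finset.mem_filter, Finset.mem_Icc, Function.comp_apply,
      hvb, sig_apply_i1 i]
    constructor
    · rintro ⟨hm, hlt⟩
      by_cases hma : m = a₀
      · exact Or.inl hma
      · have hmi : v m ≠ i := fun h => hma (hinj m a₀ (h.trans hva.symm))
        have hmi' : v m ≠ i + 1 := fun h => by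
          have := hinj m b₀ (h.trans hvb.symm); omega
        rw [sig_self i (v m) hmi hmi'] at hlt
        exact Or.inr ⟨hm, by omega⟩
    · rintro (rfl | ⟨hm, hlt⟩)
      · refine ⟨⟨ha1, by omega⟩, ?_⟩
        rw [hva, sig_apply_i]; omega
      · have hmi : v m ≠ i := fun h => by have := hinj m a₀ (h.trans hva.symm); omega
        have hmi' : v m ≠ i + 1 := fun h => by
          have := hinj m b₀ (h.trans hvb.symm); omega
        rw [sig_self i (v m) hmi hmi']
        exact ⟨hm, by omega⟩
  rw [hset, Finset.card_insert_of_notMem (by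
    simp only [Finset.mem_filter, Finset.mem_Icc, hvb, hva]
    omega)]
  rw [pow_succ]
  ring

end Sig

lemma sig_eq_iff1 (i x : ℕ) : sigmaFun i x = i ↔ x = i + 1 := by
  unfold sigmaFun; split_ifs <;> omega

lemma sig_eq_iff2 (i x : ℕ) : sigmaFun i x = i + 1 ↔ x = i := by
  unfold sigmaFun; split_ifs <;> omega

lemma sig_eq_iff3 (i x y : ℕ) (hy1 : y ≠ i) (hy2 : y ≠ i + 1) : sigmaFun i x = y ↔ x = y := by
  unfold sigmaFun; split_ifs <;> omega

section L12
variable (v : ℕ → ℕ) (i : ℕ)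

lemma sbar_mul_SPM (h1 : 1 ≤ i) (h2 : i + 1 ≤ n)
    (hinj : ∀ x y, v x = v y → x = y) (a₀ b₀ : ℕ) (ha1 : 1 ≤ a₀)
    (hva : v a₀ = i) (hvb : v b₀ = i + 1) (hab : a₀ < b₀) :
    (sbar n i : Matrix (Fin n) (Fin n) K) * SPM K n v = SPM K n (sigmaFun i ∘ v) := by
  rw [sbar_eq i h1 h2]
  ext a b
  have hp1 : ((⟨i-1, by omega⟩ : Fin n) : ℕ) + 1 = i := by simp; omega
  have hq1 : ((⟨i, by omega⟩ : Fin n) : ℕ) + 1 = i + 1 := rfl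
  simp only [Matrix.add_mul, Matrix.sub_mul, Matrix.one_mul, Matrix.add_apply,
    Matrix.sub_apply, Em_mul_apply, SPM_apply, Function.comp_apply, hp1, hq1]
  by_cases hap : a = (⟨i-1, by omega⟩ : Fin n)
  · have haq : a ≠ (⟨i, by omega⟩ : Fin n) := by
      subst hap; simp [Fin.ext_iff]; omega
    have hai : (a : ℕ) + 1 = i := by subst hap; exact hp1
    rw [if_pos hap, if_pos hap, if_neg haq, if_neg haq, hai]
    by_cases hb : v ((b : ℕ)+1) = i + 1
    · have hbb : (b:ℕ)+1 = b₀ := hinj _ _ (hb.trans hvb.symm)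
      rw [show ((b:ℕ)+1) = b₀ from hbb]
      simp only [hvb, sig_apply_i1]
      rw [etaE3 (K := K) hinj a₀ b₀ ha1 hva hvb hab]
      have hne : ¬(i = i + 1) := by omega
      simp [hne]
    · rw [if_neg (show ¬(i + 1 = v ((b:ℕ)+1)) from fun h => hb h.symm),
        if_neg (show ¬(i = sigmaFun i (v ((b:ℕ)+1))) from
          fun h => hb (by rw [eq_comm, sig_eq_iff1] at h; exact h))]
      ring
  · by_cases haq : a = (⟨i, by omega⟩ : Fin n)
    · have hai : (a : ℕ) + 1 = i + 1 := by subst haq; rfl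
      rw [if_pos haq, if_pos haq, if_neg hap, if_neg hap, hai]
      by_cases hb : v ((b : ℕ)+1) = i
      · have hbb : (b:ℕ)+1 = a₀ := hinj _ _ (hb.trans hva.symm)
        rw [show ((b:ℕ)+1) = a₀ from hbb]
        simp only [hva, sig_apply_i]
        rw [etaE2 (K := K) hinj a₀ b₀ hva hvb hab]
        have hne : ¬(i + 1 = i) := by omega
        simp [hne]
      · rw [if_neg (show ¬(i = v ((b:ℕ)+1)) from fun h => hb h.symm),
          if_neg (show ¬(i + 1 = sigmaFun i (v ((b:ℕ)+1))) from
            fun h => hb (by rw [eq_comm, sig_eq_iff2] at h; exact h))]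
        ring
    · have hai : (a : ℕ) + 1 ≠ i := by
        intro h; exact hap (by simp [Fin.ext_iff]; omega)
      have hai' : (a : ℕ) + 1 ≠ i + 1 := by
        intro h; exact haq (by simp [Fin.ext_iff]; omega)
      rw [if_neg hap, if_neg hap, if_neg haq, if_neg haq]
      by_cases hb : v ((b : ℕ)+1) = (a : ℕ) + 1
      · simp only [hb, sig_self i ((a:ℕ)+1) (fun h => hai h) (fun h => hai' h)]
        rw [etaE1 (K := K) _ (by omega) (by omega)]
        ring
      · rw [if_neg (show ¬((a:ℕ) + 1 = v ((b:ℕ)+1)) from fun h => hb h.symm),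
          if_neg (show ¬((a:ℕ) + 1 = sigmaFun i (v ((b:ℕ)+1))) from
            fun h => hb (by rw [eq_comm, sig_eq_iff3 i _ _ hai hai'] at h; exact h))]
        ring

lemma xMat_mul_SPM (h1 : 1 ≤ i) (h2 : i + 1 ≤ n)
    (hinj : ∀ x y, v x = v y → x = y) (a₀ b₀ : ℕ) (ha1 : 1 ≤ a₀) (ha2 : a₀ ≤ n)
    (hb1 : 1 ≤ b₀) (hb2 : b₀ ≤ n)
    (hva : v a₀ = i) (hvb : v b₀ = i + 1) (c : K) :
    (xMat n i c : Matrix (Fin n) (Fin n) K) * SPM K n v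
      = SPM K n v * (1 + (c * etaK K v b₀ * etaK K v a₀) •
          Em n ⟨a₀-1, by omega⟩ ⟨b₀-1, by omega⟩) := by
  rw [xMat_eq i h1 h2]
  ext a b
  simp only [Matrix.add_mul, Matrix.mul_add, Matrix.one_mul, Matrix.mul_one,
    Matrix.smul_mul, Matrix.mul_smul, Matrix.add_apply, Matrix.smul_apply,
    Em_mul_apply, mul_Em_apply, smul_eq_mul]
  congr 1
  have e1 : SPM K n v (⟨i, by omega⟩ : Fin n) b
      = if b = (⟨b₀-1, by omega⟩ : Fin n) then etaK K v b₀ else 0 := by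
    rw [SPM_apply]
    by_cases hc : (b:ℕ) + 1 = b₀
    · simp only [hc, hvb]
      rw [if_pos trivial, if_pos (show b = (⟨b₀-1, by omega⟩ : Fin n) by simp [Fin.ext_iff]; omega)]
    · have hv' : v ((b:ℕ)+1) ≠ i + 1 := fun h => hc (hinj _ _ (h.trans hvb.symm))
      rw [if_neg (show ¬(((⟨i, by omega⟩ : Fin n):ℕ) + 1 = v ((b:ℕ)+1)) from
          fun h => hv' (by rw [← h])),
        if_neg (show ¬(b = (⟨b₀-1, by omega⟩ : Fin n)) from
          fun h => hc (by simp [Fin.ext_iff] at h; omega))]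
  have e2 : SPM K n v a (⟨a₀-1, by omega⟩ : Fin n)
      = if a = (⟨i-1, by omega⟩ : Fin n) then etaK K v a₀ else 0 := by
    rw [SPM_apply]
    have ha' : ((⟨a₀-1, by omega⟩ : Fin n) : ℕ) + 1 = a₀ := by simp; omega
    rw [show v (((⟨a₀-1, by omega⟩ : Fin n) : ℕ) + 1) = i by rw [ha', hva],
      show etaK K v (((⟨a₀-1, by omega⟩ : Fin n) : ℕ) + 1) = etaK K v a₀ by rw [ha']]
    by_cases hc : (a:ℕ) + 1 = i
    · rw [if_pos hc, if_pos (by simp [Fin.ext_iff]; omega)]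
    · rw [if_neg hc, if_neg (by simp [Fin.ext_iff]; omega)]
  rw [e1, e2]
  split_ifs with u1 u2 u3
  · rw [mul_assoc (c * etaK K v b₀), etaK_sq, mul_one]
  · ring
  · ring
  · ring

end L12

section Uni

lemma isUpperUni_one : IsUpperUni (1 : Matrix (Fin n) (Fin n) K) :=
  ⟨fun i => Matrix.one_apply_eq i, fun i j h => Matrix.one_apply_ne (Fin.ne_of_gt h)⟩

lemma upperUni_mul {U V : Matrix (Fin n) (Fin n) K} (hU : IsUpperUni U)
    (hV : IsUpperUni V) : IsUpperUni (U * V) := by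
  constructor
  · intro a
    rw [Matrix.mul_apply, Finset.sum_eq_single a]
    · rw [hU.1, hV.1, one_mul]
    · intro c _ hc
      rcases lt_or_gt_of_ne hc with h | h
      · rw [hU.2 a c h, zero_mul]
      · rw [hV.2 c a h, mul_zero]
    · intro h; exact absurd (Finset.mem_univ a) h
  · intro a b hlt
    rw [Matrix.mul_apply]
    apply Finset.sum_eq_zero
    intro c _
    rcases lt_or_ge c a with h | h
    · rw [hU.2 a c h, zero_mul]
    · rw [hV.2 c b (lt_of_lt_of_le hlt h), mul_zero]

lemma isUpperUni_elem (p q : Fin n) (h : p < q) (c : K) :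
    IsUpperUni (1 + c • Em n p q : Matrix (Fin n) (Fin n) K) := by
  constructor
  · intro a
    simp only [Matrix.add_apply, Matrix.one_apply_eq, Matrix.smul_apply, Em_apply,
      smul_eq_mul]
    rw [if_neg (show ¬(a = p ∧ a = q) from fun hh => Fin.ne_of_lt h (hh.1.symm.trans hh.2))]
    ring
  · intro a b hlt
    simp only [Matrix.add_apply, Matrix.smul_apply, Em_apply, smul_eq_mul]
    rw [Matrix.one_apply_ne (Fin.ne_of_gt hlt),
      if_neg (show ¬(a = p ∧ b = q) from fun hh => by
        rw [← hh.1, ← hh.2] at h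
        exact absurd (h.trans hlt) (lt_irrefl a))]
    ring

lemma upperUni_transpose {U : Matrix (Fin n) (Fin n) K} (hU : IsUpperUni U) :
    IsLowerUni Uᵀ :=
  ⟨fun i => hU.1 i, fun i j h => hU.2 j i h⟩

lemma lowerUni_transpose {U : Matrix (Fin n) (Fin n) K} (hU : IsLowerUni U) :
    IsUpperUni Uᵀ :=
  ⟨fun i => hU.1 i, fun i j h => hU.2 j i h⟩

/-- strictly upper triangular -/
def SU (M : Matrix (Fin n) (Fin n) K) : Prop := ∀ a b : Fin n, (b:ℕ) ≤ (a:ℕ) → M a b = 0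

lemma su_mul {A B : Matrix (Fin n) (Fin n) K} (hA : SU A) (hB : SU B) : SU (A * B) := by
  intro a b h
  rw [Matrix.mul_apply]
  apply Finset.sum_eq_zero
  intro c _
  rcases le_or_gt (c:ℕ) (a:ℕ) with hc | hc
  · rw [hA a c hc, zero_mul]
  · rw [hB c b (by omega), mul_zero]

lemma su_pow_key {x : Matrix (Fin n) (Fin n) K} (hx : SU x) :
    ∀ k (a b : Fin n), (b:ℕ) < (a:ℕ) + k → (x ^ k) a b = 0 := by
  intro k
  induction k with
  | zero =>
      intro a b h
      rw [pow_zero]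
      exact Matrix.one_apply_ne (Fin.ne_of_val_ne (by omega))
  | succ k ih =>
      intro a b h
      rw [pow_succ, Matrix.mul_apply]
      apply Finset.sum_eq_zero
      intro c _
      rcases lt_or_ge (c:ℕ) ((a:ℕ) + k) with hc | hc
      · rw [ih a c hc, zero_mul]
      · rw [hx c b (by omega), mul_zero]

lemma su_pow {x : Matrix (Fin n) (Fin n) K} (hx : SU x) (m : ℕ) : SU (x ^ (m+1)) := by
  induction m with
  | zero => simpa using hx
  | succ m ih => rw [pow_succ]; exact su_mul ih hx

lemma su_pow_eq_zero {x : Matrix (Fin n) (Fin n) K} (hx : SU x) : x ^ n = 0 := by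
  ext a b
  rw [su_pow_key hx n a b (by omega)]
  rfl

lemma upperUni_exists_inv {U : Matrix (Fin n) (Fin n) K} (hU : IsUpperUni U) :
    ∃ V, IsUpperUni V ∧ U * V = 1 ∧ V * U = 1 := by
  set x : Matrix (Fin n) (Fin n) K := 1 - U with hxdef
  have hsu : SU x := by
    intro a b h
    rcases eq_or_lt_of_le h with heq | hlt
    · have : a = b := Fin.ext heq.symm
      subst this
      simp [hxdef, hU.1 a]
    · simp [hxdef, Matrix.one_apply_ne (Fin.ne_of_gt hlt), hU.2 a b hlt]
  have hxn : x ^ n = 0 := su_pow_eq_zero hsu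
  refine ⟨∑ k ∈ Finset.range n, x ^ k, ?_, ?_, ?_⟩
  · constructor
    · intro a
      rw [Matrix.sum_apply]
      have hn : 0 < n := a.pos
      rw [Finset.sum_eq_single 0]
      · simp
      · intro k _ hk0
        obtain ⟨m, rfl⟩ : ∃ m, k = m + 1 := ⟨k - 1, by omega⟩
        exact su_pow hsu m a a le_rfl
      · simp [hn]
    · intro a b hlt
      rw [Matrix.sum_apply]
      apply Finset.sum_eq_zero
      intro k _
      rcases Nat.eq_zero_or_pos k with rfl | hk
      · rw [pow_zero]; exact Matrix.one_apply_ne (Fin.ne_of_gt hlt)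
      · obtain ⟨m, rfl⟩ : ∃ m, k = m + 1 := ⟨k - 1, by omega⟩
        exact su_pow hsu m a b (le_of_lt hlt)
  · have h1 : (x - 1) * (∑ k ∈ Finset.range n, x ^ k) = x ^ n - 1 := mul_geom_sum x n
    have h2 : U = 1 - x := by rw [hxdef]; abel
    rw [h2]
    rw [show (1 - x : Matrix (Fin n) (Fin n) K) = -(x - 1) by abel, neg_mul, h1, hxn]
    abel
  · have h1 : (∑ k ∈ Finset.range n, x ^ k) * (x - 1) = x ^ n - 1 := geom_sum_mul x n
    have h2 : U = 1 - x := by rw [hxdef]; abel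
    rw [h2]
    rw [show (1 - x : Matrix (Fin n) (Fin n) K) = -(x - 1) by abel, mul_neg, h1, hxn]
    abel

lemma lowerUni_exists_inv {L : Matrix (Fin n) (Fin n) K} (hL : IsLowerUni L) :
    ∃ M, IsLowerUni M ∧ L * M = 1 ∧ M * L = 1 := by
  obtain ⟨V, hV, h1, h2⟩ := upperUni_exists_inv (lowerUni_transpose hL)
  refine ⟨Vᵀ, upperUni_transpose hV, ?_, ?_⟩
  · have := congrArg Matrix.transpose h2
    rwa [Matrix.transpose_mul, Matrix.transpose_transpose, Matrix.transpose_one] at this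
  · have := congrArg Matrix.transpose h1
    rwa [Matrix.transpose_mul, Matrix.transpose_transpose, Matrix.transpose_one] at this

end Uni

section Conj

lemma row_ops (p q : Fin n) (hpq : p ≠ q) (U : Matrix (Fin n) (Fin n) K) (a b : Fin n) :
    (((1 + Em n q p - Em n p q - Em n p p - Em n q q : Matrix (Fin n) (Fin n) K)) * U) a b
      = if a = p then -U q b else if a = q then U p b else U a b := by
  simp only [Matrix.add_mul, Matrix.sub_mul, Matrix.one_mul, Matrix.add_apply,
    Matrix.sub_apply, Em_mul_apply]
  by_cases hap : a = p
  · simp only [hap, if_pos rfl, if_neg hpq, if_true]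
    ring
  · by_cases haq : a = q
    · simp only [haq, if_pos rfl, if_neg (Ne.symm hpq), if_true]
      ring
    · simp only [if_neg hap, if_neg haq]
      ring

lemma col_ops (p q : Fin n) (hpq : p ≠ q) (M : Matrix (Fin n) (Fin n) K) (a b : Fin n) :
    ((M * ((1 + Em n p q - Em n q p - Em n p p - Em n q q : Matrix (Fin n) (Fin n) K)))) a b
      = if b = p then -M a q else if b = q then M a p else M a b := by
  simp only [Matrix.mul_add, Matrix.mul_sub, Matrix.mul_one, Matrix.add_apply,
    Matrix.sub_apply, mul_Em_apply]
  by_cases hbp : b = p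
  · simp only [hbp, if_pos rfl, if_neg hpq, if_true]
    ring
  · by_cases hbq : b = q
    · simp only [hbq, if_pos rfl, if_neg (Ne.symm hpq), if_true]
      ring
    · simp only [if_neg hbp, if_neg hbq]
      ring

lemma conj_upper (i : ℕ) (h1 : 1 ≤ i) (h2 : i + 1 ≤ n) (U : Matrix (Fin n) (Fin n) K)
    (hU : IsUpperUni U) (h0 : U ⟨i-1, by omega⟩ ⟨i, by omega⟩ = 0) :
    IsUpperUni ((sbar n i : Matrix (Fin n) (Fin n) K) * U * sbarInv n i h1 h2) := by
  have hpq : (⟨i-1, by omega⟩ : Fin n) ≠ ⟨i, by omega⟩ := by simp [Fin.ext_iff]; omega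
  set R : Matrix (Fin n) (Fin n) K := (sbar n i : Matrix (Fin n) (Fin n) K) * U with hRdef
  have hT : ∀ a b : Fin n, ((sbar n i * U * sbarInv n i h1 h2 : Matrix (Fin n) (Fin n) K)) a b
      = if b = (⟨i-1, by omega⟩ : Fin n) then -(R a ⟨i, by omega⟩)
        else if b = (⟨i, by omega⟩ : Fin n) then R a ⟨i-1, by omega⟩
        else R a b := by
    intro a b
    have he : (sbar n i * U * sbarInv n i h1 h2 : Matrix (Fin n) (Fin n) K)
        = R * (1 + Em n ⟨i-1, by omega⟩ ⟨i, by omega⟩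
            - Em n ⟨i, by omega⟩ ⟨i-1, by omega⟩ - Em n ⟨i-1, by omega⟩ ⟨i-1, by omega⟩
            - Em n ⟨i, by omega⟩ ⟨i, by omega⟩) := rfl
    rw [he, col_ops _ _ hpq]
  have hR : ∀ a b : Fin n, R a b
      = if a = (⟨i-1, by omega⟩ : Fin n) then -U ⟨i, by omega⟩ b
        else if a = (⟨i, by omega⟩ : Fin n) then U ⟨i-1, by omega⟩ b
        else U a b := by
    intro a b
    rw [hRdef, sbar_eq i h1 h2, row_ops _ _ hpq]
  constructor
  · intro a
    rw [hT]
    by_cases hap : a = (⟨i-1, by omega⟩ : Fin n)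
    · rw [if_pos hap, hR, if_pos hap, neg_neg]
      exact hU.1 _
    · by_cases haq : a = (⟨i, by omega⟩ : Fin n)
      · rw [if_neg (fun h => hpq ((haq ▸ h : (⟨i, by omega⟩ : Fin n) = ⟨i-1, by omega⟩)).symm),
          if_pos haq, hR, if_neg hap, if_pos haq]
        exact hU.1 _
      · rw [if_neg hap, if_neg haq, hR, if_neg hap, if_neg haq]
        exact hU.1 a
  · intro a b hlt
    have hba : (b : ℕ) < (a : ℕ) := hlt
    rw [hT]
    by_cases hbp : b = (⟨i-1, by omega⟩ : Fin n)
    · rw [if_pos hbp, hR]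
      have hbv : (b : ℕ) = i - 1 := by rw [hbp]
      by_cases hap : a = (⟨i-1, by omega⟩ : Fin n)
      · exfalso
        have : (a : ℕ) = i - 1 := by rw [hap]
        omega
      · by_cases haq : a = (⟨i, by omega⟩ : Fin n)
        · rw [if_neg hap, if_pos haq, h0, neg_zero]
        · rw [if_neg hap, if_neg haq]
          have hav : (a : ℕ) ≠ i - 1 := fun h => hap (by simp [Fin.ext_iff, h])
          have hav' : (a : ℕ) ≠ i := fun h => haq (by simp [Fin.ext_iff, h])
          rw [hU.2 a ⟨i, by omega⟩ (by simp only [Fin.lt_def]; omega), neg_zero]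
    · by_cases hbq : b = (⟨i, by omega⟩ : Fin n)
      · rw [if_neg hbp, if_pos hbq, hR]
        have hbv : (b : ℕ) = i := by rw [hbq]
        have hap : a ≠ (⟨i-1, by omega⟩ : Fin n) := fun h => by
          have : (a : ℕ) = i - 1 := by rw [h]
          omega
        have haq : a ≠ (⟨i, by omega⟩ : Fin n) := fun h => by
          have : (a : ℕ) = i := by rw [h]
          omega
        rw [if_neg hap, if_neg haq]
        exact hU.2 a ⟨i-1, by omega⟩ (by simp only [Fin.lt_def]; omega)
      · rw [if_neg hbp, if_neg hbq, hR]
        have hbv : (b : ℕ) ≠ i - 1 := fun h => hbp (by simp [Fin.ext_iff, h])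
        have hbv' : (b : ℕ) ≠ i := fun h => hbq (by simp [Fin.ext_iff, h])
        by_cases hap : a = (⟨i-1, by omega⟩ : Fin n)
        · have hav : (a : ℕ) = i - 1 := by rw [hap]
          rw [if_pos hap, hU.2 ⟨i, by omega⟩ b (by simp only [Fin.lt_def]; omega), neg_zero]
        · by_cases haq : a = (⟨i, by omega⟩ : Fin n)
          · have hav : (a : ℕ) = i := by rw [haq]
            rw [if_neg hap, if_pos haq]
            apply hU.2
            simp only [Fin.lt_def]
            omega
          · rw [if_neg hap, if_neg haq]
            exact hU.2 a b hlt

end Conj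

section Combo

lemma sig_invol (i x : ℕ) : sigmaFun i (sigmaFun i x) = x := by
  unfold sigmaFun; split_ifs <;> omega

/-- inversion set of `f` on `[1,n]` -/
def invS (n : ℕ) (f : ℕ → ℕ) : Finset (ℕ × ℕ) :=
  ((Finset.Icc 1 n) ×ˢ (Finset.Icc 1 n)).filter fun p => p.1 < p.2 ∧ f p.2 < f p.1

def Jn (n : ℕ) (f : ℕ → ℕ) : ℕ := (invS n f).card

lemma wordPerm_nil : wordPerm [] = id := rfl

lemma wordPerm_cons (i : ℕ) (l : List ℕ) :
    wordPerm (i :: l) = sigmaFun i ∘ wordPerm l := rfl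

lemma wordPerm_append (l1 l2 : List ℕ) :
    wordPerm (l1 ++ l2) = wordPerm l1 ∘ wordPerm l2 := by
  induction l1 with
  | nil => rfl
  | cons i l ih =>
      rw [List.cons_append, wordPerm_cons, wordPerm_cons, ih]
      rfl

lemma wordPerm_inj (l : List ℕ) : ∀ x y, wordPerm l x = wordPerm l y → x = y := by
  induction l with
  | nil => exact fun x y h => h
  | cons i l ih =>
      intro x y h
      rw [wordPerm_cons] at h
      apply ih
      have := congrArg (sigmaFun i) h
      simp only [Function.comp_apply] at this
      rwa [sig_invol, sig_invol] at this

lemma wordPerm_bounds (l : List ℕ) (hl : ∀ j ∈ l, 1 ≤ j ∧ j ≤ n - 1) :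
    ∀ k, 1 ≤ k → k ≤ n → 1 ≤ wordPerm l k ∧ wordPerm l k ≤ n := by
  induction l with
  | nil => intro k h1 h2; exact ⟨h1, h2⟩
  | cons i l ih =>
      intro k h1 h2
      obtain ⟨hi1, hi2⟩ := hl i (List.mem_cons_self)
      have hrest := ih (fun j hj => hl j (List.mem_cons_of_mem i hj)) k h1 h2
      rw [wordPerm_cons, Function.comp_apply]
      unfold sigmaFun
      split_ifs <;> omega

lemma wordPerm_exists_pre (l : List ℕ) (hl : ∀ j ∈ l, 1 ≤ j ∧ j ≤ n - 1)
    (t : ℕ) (ht1 : 1 ≤ t) (ht2 : t ≤ n) :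
    ∃ a, 1 ≤ a ∧ a ≤ n ∧ wordPerm l a = t := by
  have hsub : (Finset.Icc 1 n).image (wordPerm l) ⊆ Finset.Icc 1 n := by
    intro x hx
    rw [Finset.mem_image] at hx
    obtain ⟨a, ha, rfl⟩ := hx
    rw [Finset.mem_Icc] at ha ⊢
    exact wordPerm_bounds l hl a ha.1 ha.2
  have hcard : (Finset.Icc 1 n).card ≤ ((Finset.Icc 1 n).image (wordPerm l)).card := by
    rw [Finset.card_image_of_injective _ (fun x y => wordPerm_inj l x y)]
  have heq := Finset.eq_of_subset_of_card_le hsub hcard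
  have : t ∈ (Finset.Icc 1 n).image (wordPerm l) := by
    rw [heq, Finset.mem_Icc]; exact ⟨ht1, ht2⟩
  rw [Finset.mem_image] at this
  obtain ⟨a, ha, hfa⟩ := this
  rw [Finset.mem_Icc] at ha
  exact ⟨a, ha.1, ha.2, hfa⟩

lemma sig_comp_iff (i : ℕ) (f : ℕ → ℕ) (hinj : ∀ x y, f x = f y → x = y)
    (a₀ b₀ : ℕ) (hfa : f a₀ = i) (hfb : f b₀ = i + 1) (x y : ℕ) (hxy : x ≠ y) :
    (sigmaFun i (f y) < sigmaFun i (f x)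
      ↔ ((f y < f x ∧ ¬(x = b₀ ∧ y = a₀)) ∨ (x = a₀ ∧ y = b₀))) := by
  have e1 : x = a₀ ↔ f x = i := ⟨fun h => h ▸ hfa, fun h => hinj _ _ (h.trans hfa.symm)⟩
  have e2 : y = a₀ ↔ f y = i := ⟨fun h => h ▸ hfa, fun h => hinj _ _ (h.trans hfa.symm)⟩
  have e3 : x = b₀ ↔ f x = i + 1 := ⟨fun h => h ▸ hfb, fun h => hinj _ _ (h.trans hfb.symm)⟩
  have e4 : y = b₀ ↔ f y = i + 1 := ⟨fun h => h ▸ hfb, fun h => hinj _ _ (h.trans hfb.symm)⟩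
  have hne : f x ≠ f y := fun h => hxy (hinj _ _ h)
  rw [e1, e3, e4, e2]
  unfold sigmaFun
  split_ifs <;> omega

lemma invS_step (f : ℕ → ℕ) (i : ℕ) (h1 : 1 ≤ i) (h2 : i + 1 ≤ n)
    (hinj : ∀ x y, f x = f y → x = y) (a₀ b₀ : ℕ)
    (ha1 : 1 ≤ a₀) (ha2 : a₀ ≤ n) (hb1 : 1 ≤ b₀) (hb2 : b₀ ≤ n)
    (hfa : f a₀ = i) (hfb : f b₀ = i + 1) :
    invS n (sigmaFun i ∘ f)
      = if a₀ < b₀ then insert (a₀, b₀) (invS n f) else (invS n f).erase (b₀, a₀) := by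
  have hab : a₀ ≠ b₀ := fun h => by rw [h, hfb] at hfa; omega
  split_ifs with hlt
  · ext ⟨x, y⟩
    simp only [invS, Finset.mem_insert, Finset.mem_filter, Finset.mem_product,
      Finset.mem_Icc, Function.comp_apply, Prod.mk.injEq]
    constructor
    · rintro ⟨hS, hxy, hs⟩
      rw [sig_comp_iff i f hinj a₀ b₀ hfa hfb x y (by omega)] at hs
      rcases hs with ⟨h, _⟩ | ⟨rfl, rfl⟩
      · exact Or.inr ⟨hS, hxy, h⟩
      · exact Or.inl ⟨rfl, rfl⟩
    · rintro (⟨hx, hy⟩ | ⟨hS, hxy, h⟩)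
      · rw [hx, hy]
        refine ⟨⟨⟨ha1, ha2⟩, hb1, hb2⟩, hlt, ?_⟩
        rw [sig_comp_iff i f hinj a₀ b₀ hfa hfb _ _ (by omega)]
        exact Or.inr ⟨rfl, rfl⟩
      · refine ⟨hS, hxy, ?_⟩
        rw [sig_comp_iff i f hinj a₀ b₀ hfa hfb x y (by omega)]
        exact Or.inl ⟨h, fun ⟨hx, hy⟩ => by subst hx; subst hy; omega⟩
  · ext ⟨x, y⟩
    simp only [invS, Finset.mem_erase, Finset.mem_filter, Finset.mem_product,
      Finset.mem_Icc, Function.comp_apply]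
    constructor
    · rintro ⟨hS, hxy, hs⟩
      rw [sig_comp_iff i f hinj a₀ b₀ hfa hfb x y (by omega)] at hs
      rcases hs with ⟨h, hne⟩ | ⟨rfl, rfl⟩
      · exact ⟨fun heq => hne (by rw [Prod.mk.injEq] at heq; exact heq), hS, hxy, h⟩
      · omega
    · rintro ⟨hne, hS, hxy, h⟩
      refine ⟨hS, hxy, ?_⟩
      rw [sig_comp_iff i f hinj a₀ b₀ hfa hfb x y (by omega)]
      exact Or.inl ⟨h, fun ⟨hx, hy⟩ => hne (by rw [hx, hy])⟩

lemma Jn_nil : Jn n id = 0 := by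
  rw [Jn, invS, Finset.card_eq_zero, Finset.filter_eq_empty_iff]
  rintro ⟨x, y⟩ _
  simp only [id_eq, not_and]
  omega

lemma Jn_le (l : List ℕ) (hl : ∀ j ∈ l, 1 ≤ j ∧ j ≤ n - 1) (hn : 2 ≤ n) :
    Jn n (wordPerm l) ≤ l.length := by
  induction l with
  | nil => rw [wordPerm_nil, Jn_nil]; exact Nat.zero_le _
  | cons i l ih =>
      obtain ⟨hi1, hi2⟩ := hl i (List.mem_cons_self)
      have hlb := fun j hj => hl j (List.mem_cons_of_mem i hj)
      obtain ⟨a₀, ha1, ha2, hfa⟩ := wordPerm_exists_pre l hlb i hi1 (by omega)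
      obtain ⟨b₀, hb1, hb2, hfb⟩ := wordPerm_exists_pre l hlb (i+1) (by omega) (by omega)
      have hstep := invS_step (wordPerm l) i hi1 (by omega) (wordPerm_inj l)
        a₀ b₀ ha1 ha2 hb1 hb2 hfa hfb
      have hle1 : Jn n (sigmaFun i ∘ wordPerm l) ≤ Jn n (wordPerm l) + 1 := by
        rw [Jn, hstep]
        split_ifs
        · exact Finset.card_insert_le _ _
        · exact le_trans Finset.card_erase_le (Nat.le_succ _)
      have hih := ih hlb
      rw [wordPerm_cons, List.length_cons]
      omega

lemma Jn_chain (i : ℕ) (l : List ℕ) (hi1 : 1 ≤ i) (hi2 : i ≤ n - 1) (hn : 2 ≤ n)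
    (hlb : ∀ j ∈ l, 1 ≤ j ∧ j ≤ n - 1)
    (hJ : Jn n (wordPerm (i :: l)) = (i :: l).length) :
    Jn n (wordPerm l) = l.length ∧
      ∀ a₀ b₀, 1 ≤ a₀ → a₀ ≤ n → 1 ≤ b₀ → b₀ ≤ n →
        wordPerm l a₀ = i → wordPerm l b₀ = i + 1 → a₀ < b₀ := by
  obtain ⟨a₀, ha1, ha2, hfa⟩ := wordPerm_exists_pre l hlb i hi1 (by omega)
  obtain ⟨b₀, hb1, hb2, hfb⟩ := wordPerm_exists_pre l hlb (i+1) (by omega) (by omega)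
  have hstep := invS_step (wordPerm l) i hi1 (by omega) (wordPerm_inj l)
    a₀ b₀ ha1 ha2 hb1 hb2 hfa hfb
  have hle := Jn_le l hlb hn
  rw [wordPerm_cons] at hJ
  have hJ' : Jn n (sigmaFun i ∘ wordPerm l) = l.length + 1 := by
    simpa using hJ
  by_cases hab : a₀ < b₀
  · have hnotmem : (a₀, b₀) ∉ invS n (wordPerm l) := by
      simp only [invS, Finset.mem_filter, not_and]
      intro _ _
      rw [hfa, hfb]; omega
    have : Jn n (sigmaFun i ∘ wordPerm l) = Jn n (wordPerm l) + 1 := by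
      rw [Jn, hstep, if_pos hab, Finset.card_insert_of_notMem hnotmem]; rfl
    have hJl : Jn n (wordPerm l) = l.length := by omega
    refine ⟨hJl, ?_⟩
    intro a₁ b₁ _ _ _ _ hfa1 hfb1
    have : a₁ = a₀ := wordPerm_inj l _ _ (hfa1.trans hfa.symm)
    have : b₁ = b₀ := wordPerm_inj l _ _ (hfb1.trans hfb.symm)
    omega
  · exfalso
    have hmem : (b₀, a₀) ∈ invS n (wordPerm l) := by
      simp only [invS, Finset.mem_filter, Finset.mem_product, Finset.mem_Icc]
      refine ⟨⟨⟨hb1, hb2⟩, ha1, ha2⟩, ?_, ?_⟩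
      · have : a₀ ≠ b₀ := fun h => by rw [h, hfb] at hfa; omega
        omega
      · rw [hfa, hfb]; omega
    have : Jn n (sigmaFun i ∘ wordPerm l) = Jn n (wordPerm l) - 1 := by
      rw [Jn, hstep, if_neg hab, Finset.card_erase_of_mem hmem]; rfl
    have hpos : 1 ≤ Jn n (wordPerm l) := by
      rw [Jn]
      exact Finset.card_pos.mpr ⟨_, hmem⟩
    omega

lemma card_allpairs (n : ℕ) :
    (((Finset.Icc 1 n) ×ˢ (Finset.Icc 1 n)).filter fun p : ℕ × ℕ => p.1 < p.2).card
      = n * (n - 1) / 2 := by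
  rw [Finset.card_eq_sum_card_fiberwise
    (f := fun p : ℕ × ℕ => p.2) (t := Finset.Icc 1 n)
    (by rintro ⟨x, y⟩ hp
        simp only [Finset.mem_filter, Finset.mem_product, Finset.mem_coe] at hp
        exact hp.1.2)]
  have hfib : ∀ y ∈ Finset.Icc 1 n,
      ((((Finset.Icc 1 n) ×ˢ (Finset.Icc 1 n)).filter fun p : ℕ × ℕ => p.1 < p.2).filter
        fun p => p.2 = y).card = y - 1 := by
    intro y hy
    rw [Finset.mem_Icc] at hy
    have : ((((Finset.Icc 1 n) ×ˢ (Finset.Icc 1 n)).filter fun p : ℕ × ℕ => p.1 < p.2).filter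
        fun p => p.2 = y) = (Finset.Icc 1 (y-1)).image fun a => (a, y) := by
      ext ⟨x, y'⟩
      simp only [Finset.mem_filter, Finset.mem_product, Finset.mem_Icc, Finset.mem_image,
        Prod.mk.injEq]
      constructor
      · rintro ⟨⟨⟨hx, hy'⟩, hxy⟩, rfl⟩
        exact ⟨x, ⟨hx.1, by omega⟩, rfl, rfl⟩
      · rintro ⟨a, ha, rfl, rfl⟩
        exact ⟨⟨⟨⟨by omega, by omega⟩, hy⟩, by omega⟩, rfl⟩
    rw [this, Finset.card_image_of_injective _ (fun a b h => (Prod.mk.injEq _ _ _ _).mp h |>.1),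
      Nat.card_Icc]
    omega
  rw [Finset.sum_congr rfl hfib]
  have : Finset.Icc 1 n = (Finset.range n).image (· + 1) := by
    ext k
    simp only [Finset.mem_Icc, Finset.mem_image, Finset.mem_range]
    constructor
    · intro ⟨h1, h2⟩; exact ⟨k - 1, by omega, by omega⟩
    · rintro ⟨m, hm, rfl⟩; omega
  rw [this, Finset.sum_image (fun a _ b _ h => by omega)]
  simp only [Nat.add_sub_cancel]
  exact Finset.sum_range_id n

lemma Jn_of_reduced (l : List ℕ) (hn : 2 ≤ n) (hl : IsReducedWord n l) :
    Jn n (wordPerm l) = l.length := by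
  obtain ⟨hlen, hmem, hperm⟩ := hl
  have : invS n (wordPerm l)
      = ((Finset.Icc 1 n) ×ˢ (Finset.Icc 1 n)).filter fun p : ℕ × ℕ => p.1 < p.2 := by
    unfold invS
    apply Finset.filter_congr
    rintro ⟨x, y⟩ hp
    simp only [Finset.mem_product, Finset.mem_Icc] at hp
    obtain ⟨⟨hx1, hx2⟩, hy1, hy2⟩ := hp
    rw [hperm x hx1 hx2, hperm y hy1 hy2]
    constructor
    · rintro ⟨h, _⟩; exact h
    · intro h; exact ⟨h, by omega⟩
  rw [Jn, this, card_allpairs, hlen]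

end Combo

section I0

lemma i0_rec (m : ℕ) : i0List (m+2) = List.range' 1 (m+1) ++ i0List (m+1) := by
  show ((List.range (m+1)).map fun j => List.range' 1 (m+1-j)).foldr (· ++ ·) []
    = List.range' 1 (m+1) ++ ((List.range m).map fun j => List.range' 1 (m-j)).foldr (· ++ ·) []
  rw [List.range_succ_eq_map, List.map_cons, List.map_map, List.foldr_cons]
  have hfun : ((fun j => List.range' 1 (m+1-j)) ∘ Nat.succ) = fun j => List.range' 1 (m-j) := by
    funext j
    simp only [Function.comp_apply]
    congr 1
    omega
  rw [hfun]
  rfl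

lemma i0_len : ∀ n, (i0List n).length = n * (n-1) / 2 := by
  intro n
  induction n with
  | zero => rfl
  | succ n ih =>
      rcases Nat.eq_zero_or_pos n with rfl | hn
      · rfl
      · obtain ⟨m, rfl⟩ : ∃ m, n = m + 1 := ⟨n - 1, by omega⟩
        rw [i0_rec, List.length_append, List.length_range', ih]
        obtain ⟨k, hk⟩ := Nat.even_mul_succ_self m
        have h2 : (m+2)*(m+1) = m*(m+1) + 2*(m+1) := by ring
        have h3 : (m+1)*m = m*(m+1) := by ring
        have h4 : (m+2)*(m+2-1) = (m+2)*(m+1) := rfl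
        have h5 : (m+1)*(m+1-1) = (m+1)*m := rfl
        rw [h4, h5, h3]
        omega

lemma i0_mem : ∀ n, ∀ j ∈ i0List n, 1 ≤ j ∧ j ≤ n - 1 := by
  intro n
  induction n with
  | zero => intro j hj; simp [i0List] at hj
  | succ n ih =>
      rcases Nat.eq_zero_or_pos n with rfl | hn
      · intro j hj; simp [i0List] at hj
      · obtain ⟨m, rfl⟩ : ∃ m, n = m + 1 := ⟨n - 1, by omega⟩
        intro j hj
        rw [i0_rec, List.mem_append] at hj
        rcases hj with hj | hj
        · rw [List.mem_range'_1] at hj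
          omega
        · have := ih j hj
          omega

lemma wordPerm_range' (m : ℕ) : ∀ k, wordPerm (List.range' 1 m) k
    = if 1 ≤ k ∧ k ≤ m then k + 1 else if k = m + 1 then 1 else k := by
  induction m with
  | zero =>
      intro k
      rw [show List.range' 1 0 = [] from rfl, wordPerm_nil, id_eq]
      split_ifs <;> omega
  | succ m ih =>
      intro k
      have hconc : List.range' 1 (m+1) = List.range' 1 m ++ [1+m] := by
        have := (List.range'_concat (step := 1) : List.range' 1 (m+1) = List.range' 1 m ++ [1 + 1 * m])
        simpa using this
      rw [hconc, wordPerm_append, Function.comp_apply]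
      have hsingle : wordPerm [1+m] k = sigmaFun (1+m) k := rfl
      rw [hsingle, ih]
      unfold sigmaFun
      split_ifs <;> omega

lemma i0_perm : ∀ n, ∀ k, 1 ≤ k → wordPerm (i0List n) k = if k ≤ n then n + 1 - k else k := by
  intro n
  induction n with
  | zero =>
      intro k hk
      rw [show i0List 0 = [] from rfl, wordPerm_nil, id_eq]
      split_ifs <;> omega
  | succ n ih =>
      rcases Nat.eq_zero_or_pos n with rfl | hn
      · intro k hk
        rw [show i0List 1 = [] from rfl, wordPerm_nil, id_eq]
        split_ifs <;> omega
      · obtain ⟨m, rfl⟩ : ∃ m, n = m + 1 := ⟨n - 1, by omega⟩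
        intro k hk
        rw [i0_rec, wordPerm_append, Function.comp_apply, ih k hk, wordPerm_range']
        split_ifs <;> omega

lemma i0_reduced (hn : 2 ≤ n) : IsReducedWord n (i0List n) := by
  refine ⟨i0_len n, i0_mem n, fun k h1 h2 => ?_⟩
  rw [i0_perm n k h1, if_pos h2]

end I0

section Prods

lemma xnegProd_nil (z : ℕ → K) : xnegProd n [] z = 1 := rfl

lemma xnegProd_cons (i : ℕ) (l : List ℕ) (z : ℕ → K) :
    xnegProd n (i :: l) z = xnegMat n i (z 1) * xnegProd n l (fun k => z (k+1)) := by
  unfold xnegProd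
  rw [List.length_cons, List.range_succ_eq_map, List.map_cons, List.map_map, List.prod_cons]
  congr 1

def sbarProd (n : ℕ) (l : List ℕ) : Matrix (Fin n) (Fin n) K :=
  (l.map fun i => sbar n i).prod

lemma sbarProd_nil : sbarProd n ([] : List ℕ) = (1 : Matrix (Fin n) (Fin n) K) := rfl

lemma sbarProd_cons (i : ℕ) (l : List ℕ) :
    (sbarProd n (i :: l) : Matrix (Fin n) (Fin n) K) = sbar n i * sbarProd n l := by
  unfold sbarProd
  rw [List.map_cons, List.prod_cons]

lemma sbarProd_eq (hn : 2 ≤ n) : ∀ l : List ℕ, (∀ j ∈ l, 1 ≤ j ∧ j ≤ n - 1) →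
    Jn n (wordPerm l) = l.length →
    (sbarProd n l : Matrix (Fin n) (Fin n) K) = SPM K n (wordPerm l) := by
  intro l
  induction l with
  | nil => intro _ _; rw [sbarProd_nil, wordPerm_nil, SPM_id]
  | cons i l ih =>
      intro hl hJ
      obtain ⟨hi1, hi2⟩ := hl i (List.mem_cons_self)
      have hlb := fun j hj => hl j (List.mem_cons_of_mem i hj)
      obtain ⟨hJ', hdesc⟩ := Jn_chain i l hi1 hi2 hn hlb hJ
      obtain ⟨a₀, ha1, ha2, hfa⟩ := wordPerm_exists_pre l hlb i hi1 (by omega)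
      obtain ⟨b₀, hb1, hb2, hfb⟩ := wordPerm_exists_pre l hlb (i+1) (by omega) (by omega)
      have hab := hdesc a₀ b₀ ha1 ha2 hb1 hb2 hfa hfb
      rw [sbarProd_cons, ih hlb hJ', wordPerm_cons]
      exact sbar_mul_SPM (wordPerm l) i hi1 (by omega) (wordPerm_inj l) a₀ b₀ ha1 hfa hfb hab

lemma xMat_zero (i : ℕ) (h1 : 1 ≤ i) (h2 : i + 1 ≤ n) :
    (xMat n i 0 : Matrix (Fin n) (Fin n) K) = 1 := by
  rw [xMat_eq i h1 h2, zero_smul, add_zero]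

lemma xnegProd_eq (hn : 2 ≤ n) : ∀ l : List ℕ, ∀ z : ℕ → K,
    (∀ j ∈ l, 1 ≤ j ∧ j ≤ n - 1) → Jn n (wordPerm l) = l.length →
    (∀ k, 1 ≤ k → k ≤ l.length → z k ≠ 0) →
    ∃ U V : Matrix (Fin n) (Fin n) K, IsUpperUni U ∧ IsUpperUni V ∧
      xnegProd n l z = U * SPM K n (wordPerm l) * V := by
  intro l
  induction l with
  | nil =>
      intro z _ _ _
      refine ⟨1, 1, isUpperUni_one, isUpperUni_one, ?_⟩
      rw [xnegProd_nil, wordPerm_nil, SPM_id, one_mul, one_mul]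
  | cons i l ih =>
      intro z hl hJ hz
      obtain ⟨hi1, hi2⟩ := hl i (List.mem_cons_self)
      have hn' : i + 1 ≤ n := by omega
      have hlb := fun j hj => hl j (List.mem_cons_of_mem i hj)
      obtain ⟨hJ', hdesc⟩ := Jn_chain i l hi1 hi2 hn hlb hJ
      obtain ⟨a₀, ha1, ha2, hfa⟩ := wordPerm_exists_pre l hlb i hi1 (by omega)
      obtain ⟨b₀, hb1, hb2, hfb⟩ := wordPerm_exists_pre l hlb (i+1) (by omega) (by omega)
      have hab := hdesc a₀ b₀ ha1 ha2 hb1 hb2 hfa hfb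
      obtain ⟨U', V', hU', hV', hprod⟩ := ih (fun k => z (k+1)) hlb hJ'
        (fun k hk1 hk2 => hz (k+1) (by omega) (by rw [List.length_cons]; omega))
      set w : K := z 1 with hwdef
      have hw : w ≠ 0 := hz 1 (by omega) (by rw [List.length_cons]; omega)
      have hxupper : ∀ c : K, IsUpperUni (xMat n i c : Matrix (Fin n) (Fin n) K) := by
        intro c
        rw [xMat_eq i hi1 hn']
        exact isUpperUni_elem _ _ (by rw [Fin.mk_lt_mk]; omega) c
      set U₂ : Matrix (Fin n) (Fin n) K := xMat n i w * U' with hU₂def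
      have hU₂ : IsUpperUni U₂ := upperUni_mul (hxupper w) hU'
      set c : K := U₂ ⟨i-1, by omega⟩ ⟨i, by omega⟩ with hcdef
      set U₃ : Matrix (Fin n) (Fin n) K := U₂ * xMat n i (-c) with hU₃def
      have hU₃ : IsUpperUni U₃ := upperUni_mul hU₂ (hxupper (-c))
      have h0 : U₃ ⟨i-1, by omega⟩ ⟨i, by omega⟩ = 0 := by
        rw [hU₃def, xMat_eq i hi1 hn']
        simp only [Matrix.mul_add, Matrix.mul_one, Matrix.mul_smul, Matrix.add_apply,
          Matrix.smul_apply, mul_Em_apply, smul_eq_mul]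
        rw [if_pos trivial, hU₂.1, ← hcdef]
        ring
      have hsplit : xMat n i w * U' = U₃ * xMat n i c := by
        rw [hU₃def, mul_assoc, xMat_mul_xMat i hi1 hn', neg_add_cancel,
          xMat_zero i hi1 hn', mul_one, hU₂def]
      set v : ℕ → ℕ := wordPerm l with hvdef
      set X' : Matrix (Fin n) (Fin n) K :=
        1 + (c * etaK K v b₀ * etaK K v a₀) • Em n ⟨a₀-1, by omega⟩ ⟨b₀-1, by omega⟩
        with hX'def
      have hX' : IsUpperUni X' := isUpperUni_elem _ _ (by rw [Fin.mk_lt_mk]; omega) _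
      have hDP : (xMat n i c : Matrix (Fin n) (Fin n) K) * SPM K n v = SPM K n v * X' :=
        xMat_mul_SPM v i hi1 hn' (wordPerm_inj l) a₀ b₀ ha1 ha2 hb1 hb2 hfa hfb c
      have hBP : (sbar n i : Matrix (Fin n) (Fin n) K) * SPM K n v
          = SPM K n (sigmaFun i ∘ v) :=
        sbar_mul_SPM v i hi1 hn' (wordPerm_inj l) a₀ b₀ ha1 hfa hfb hab
      set T : Matrix (Fin n) (Fin n) K := sbar n i * U₃ * sbarInv n i hi1 hn' with hTdef
      have hT : IsUpperUni T := conj_upper i hi1 hn' U₃ hU₃ h0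
      refine ⟨xMat n i w⁻¹ * T, X' * V', upperUni_mul (hxupper w⁻¹) hT,
        upperUni_mul hX' hV', ?_⟩
      rw [xnegProd_cons, hprod, wordPerm_cons]
      rw [xneg_fact i hi1 hn' w hw]
      calc (xMat n i w⁻¹ * sbar n i * xMat n i w) * (U' * SPM K n v * V')
          = xMat n i w⁻¹ * sbar n i * (xMat n i w * U') * (SPM K n v * V') := by
            noncomm_ring
        _ = xMat n i w⁻¹ * sbar n i * (U₃ * xMat n i c) * (SPM K n v * V') := by
            rw [hsplit]
        _ = xMat n i w⁻¹ * (sbar n i * U₃) * (xMat n i c * SPM K n v) * V' := by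
            noncomm_ring
        _ = xMat n i w⁻¹ * (sbar n i * U₃) * (SPM K n v * X') * V' := by
            rw [hDP]
        _ = xMat n i w⁻¹ * (sbar n i * U₃ * (sbarInv n i hi1 hn' * sbar n i))
              * (SPM K n v * (X' * V')) := by
            rw [sbarInv_mul_sbar i hi1 hn', mul_one]
            noncomm_ring
        _ = xMat n i w⁻¹ * T * (sbar n i * SPM K n v) * (X' * V') := by
            rw [hTdef]
            noncomm_ring
        _ = xMat n i w⁻¹ * T * SPM K n (sigmaFun i ∘ v) * (X' * V') := by
            rw [hBP]

end Prods

section Rev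

def revF (n : ℕ) : ℕ → ℕ := fun k => n + 1 - k

lemma SPM_rev_apply (a c : Fin n) :
    SPM K n (revF n) a c
      = if (c:ℕ) = n - 1 - (a:ℕ) then etaK K (revF n) (n - (a:ℕ)) else 0 := by
  rw [SPM_apply]
  by_cases h : (c:ℕ) = n - 1 - (a:ℕ)
  · rw [if_pos (show (a:ℕ) + 1 = revF n ((c:ℕ)+1) by unfold revF; omega), if_pos h]
    congr 1
    omega
  · rw [if_neg (show ¬((a:ℕ) + 1 = revF n ((c:ℕ)+1)) by unfold revF; omega), if_neg h]

lemma M0_orth (hn : 1 ≤ n) :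
    (SPM K n (revF n)) * (SPM K n (revF n))ᵀ = 1 := by
  ext a b
  rw [Matrix.mul_apply]
  by_cases hab : a = b
  · subst hab
    rw [Finset.sum_eq_single (⟨n - 1 - (a:ℕ), by omega⟩ : Fin n)]
    · rw [Matrix.transpose_apply, SPM_rev_apply, if_pos rfl, etaK_sq,
        Matrix.one_apply_eq]
    · intro c _ hc
      rw [SPM_rev_apply, if_neg (fun h => hc (Fin.ext h)), zero_mul]
    · intro h; exact absurd (Finset.mem_univ _) h
  · rw [Matrix.one_apply_ne hab]
    apply Finset.sum_eq_zero
    intro c _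
    rw [Matrix.transpose_apply, SPM_rev_apply, SPM_rev_apply]
    by_cases h1 : (c:ℕ) = n - 1 - (a:ℕ)
    · rw [if_neg (show ¬((c:ℕ) = n - 1 - (b:ℕ)) from fun h2 => hab (Fin.ext (by omega)))]
      rw [mul_zero]
    · rw [if_neg h1, zero_mul]

lemma conj_lower_entry (hn : 1 ≤ n) (L : Matrix (Fin n) (Fin n) K) (a b : Fin n) :
    (SPM K n (revF n) * L * (SPM K n (revF n))ᵀ) a b
      = etaK K (revF n) (n - (a:ℕ)) * L ⟨n - 1 - (a:ℕ), by omega⟩ ⟨n - 1 - (b:ℕ), by omega⟩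
          * etaK K (revF n) (n - (b:ℕ)) := by
  rw [Matrix.mul_apply]
  rw [Finset.sum_eq_single (⟨n - 1 - (b:ℕ), by omega⟩ : Fin n)]
  · rw [Matrix.transpose_apply, SPM_rev_apply, if_pos rfl]
    congr 1
    rw [Matrix.mul_apply]
    rw [Finset.sum_eq_single (⟨n - 1 - (a:ℕ), by omega⟩ : Fin n)]
    · rw [SPM_rev_apply, if_pos rfl]
    · intro c _ hc
      rw [SPM_rev_apply, if_neg (fun h => hc (Fin.ext h)), zero_mul]
    · intro h; exact absurd (Finset.mem_univ _) h
  · intro d _ hd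
    rw [Matrix.transpose_apply, SPM_rev_apply, if_neg (fun h => hd (Fin.ext h)), mul_zero]
  · intro h; exact absurd (Finset.mem_univ _) h

lemma conj_lower (hn : 1 ≤ n) (L : Matrix (Fin n) (Fin n) K) (hL : IsLowerUni L) :
    IsUpperUni (SPM K n (revF n) * L * (SPM K n (revF n))ᵀ) := by
  constructor
  · intro a
    rw [conj_lower_entry hn L a a, hL.1, mul_one, etaK_sq]
  · intro a b hba
    have hba' : (b:ℕ) < (a:ℕ) := hba
    rw [conj_lower_entry hn L a b,
      hL.2 _ _ (show (⟨n - 1 - (a:ℕ), by omega⟩ : Fin n) < ⟨n - 1 - (b:ℕ), by omega⟩ by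
        rw [Fin.mk_lt_mk]; omega),
      mul_zero, zero_mul]

end Rev

end Aux

theorem stmt0 (n : ℕ) (hn : 2 ≤ n) (l : List ℕ) (hl : IsReducedWord n l)
    (z : ℕ → K) (hz : ∀ k, 1 ≤ k → k ≤ n * (n - 1) / 2 → z k ≠ 0) :
    ∃ L U : Matrix (Fin n) (Fin n) K, IsLowerUni L ∧ IsUpperUni U ∧
      (w0Mat n * (xnegProd n l z)ᵀ)⁻¹ = L * U := by
  have hn1 : 1 ≤ n := by omega
  obtain ⟨hlen, hmem, hperm⟩ := hl
  have hJ : Aux.Jn n (wordPerm l) = l.length := Aux.Jn_of_reduced l hn ⟨hlen, hmem, hperm⟩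
  have hz' : ∀ k, 1 ≤ k → k ≤ l.length → z k ≠ 0 := fun k h1 h2 => hz k h1 (hlen ▸ h2)
  obtain ⟨U1, V1, hU1, hV1, hA⟩ := Aux.xnegProd_eq hn l z hmem hJ hz'
  have hSPMl : Aux.SPM K n (wordPerm l) = Aux.SPM K n (Aux.revF n) :=
    Aux.SPM_congr _ _ (fun m h1 h2 => by rw [hperm m h1 h2]; rfl)
  rw [hSPMl] at hA
  have hw0 : (w0Mat n : Matrix (Fin n) (Fin n) K) = Aux.SPM K n (Aux.revF n) := by
    have hred := Aux.i0_reduced (n := n) hn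
    have h1 : (w0Mat n : Matrix (Fin n) (Fin n) K) = Aux.sbarProd n (i0List n) := rfl
    rw [h1, Aux.sbarProd_eq hn (i0List n) hred.2.1
      (Aux.Jn_of_reduced (i0List n) hn hred)]
    exact Aux.SPM_congr _ _ (fun m hm1 hm2 => by rw [hred.2.2 m hm1 hm2]; rfl)
  set M0 : Matrix (Fin n) (Fin n) K := Aux.SPM K n (Aux.revF n) with hM0
  have key : w0Mat n * (xnegProd n l z)ᵀ = (M0 * V1ᵀ * M0ᵀ) * U1ᵀ := by
    rw [hw0, hA, Matrix.transpose_mul, Matrix.transpose_mul]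
    noncomm_ring
  have hupper : IsUpperUni (M0 * V1ᵀ * M0ᵀ) :=
    Aux.conj_lower hn1 V1ᵀ (Aux.upperUni_transpose hV1)
  have hlower : IsLowerUni U1ᵀ := Aux.upperUni_transpose hU1
  obtain ⟨Uinv, hUinv, hUV1, hUV2⟩ := Aux.upperUni_exists_inv hupper
  obtain ⟨Linv, hLinv, hLV1, hLV2⟩ := Aux.lowerUni_exists_inv hlower
  refine ⟨Linv, Uinv, hLinv, hUinv, ?_⟩
  apply Matrix.inv_eq_right_inv
  rw [key]
  have hassoc : (M0 * V1ᵀ * M0ᵀ) * U1ᵀ * (Linv * Uinv)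
      = (M0 * V1ᵀ * M0ᵀ) * ((U1ᵀ * Linv) * Uinv) := by noncomm_ring
  rw [hassoc, hLV1, one_mul, hUV1]
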